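/- Let R be a commutative ring, I ⊆ R an ideal, and x ∈ R a nonzerodivisor on R/I. Then for every n ≥ 1 there is an isomorphism of R-modules I(R/x^nR) = (I + x^nR)/x^nR ≅ I/x^nI. -/

import Mathlib

/-- Let `R` be a commutative ring, `I ⊆ R` an ideal, and `x ∈ R` a nonzerodivisor on `R/I`.
Then for every `n ≥ 1` there is an isomorphism of `R`-modules
`I(R/x^nR) = (I + x^nR)/x^nR ≅ I/x^nI`. -/
theorem image_ideal_iso_quotient_pow_smul (R : Type*) [CommRing R] (I : Ideal R) (x : R)
    (hx : ∀ r : R, x * r ∈ I → r ∈ I) (n : ℕ) (hn : 1 ≤ n) :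
    Nonempty ((↥I ⧸ (Ideal.span {x ^ n} • (⊤ : Submodule R ↥I))) ≃ₗ[R]
      ↥((Ideal.map (Ideal.Quotient.mk (Ideal.span {x ^ n})) I).restrictScalars R)) := by
  set J : Ideal R := Ideal.span {x ^ n} with hJ
  -- x^n is a nonzerodivisor mod I
  have hxn' : ∀ m, ∀ r : R, x ^ m * r ∈ I → r ∈ I := by
    intro m
    induction m with
    | zero => intro r hr; simpa using hr
    | succ k ih =>
      intro r hr
      rw [pow_succ, mul_comm (x ^ k) x, mul_assoc] at hr
      exact ih r (hx _ hr)
  have hxn := hxn' n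
  -- the linear map from I to the image of I in R/J
  let f : ↥I →ₗ[R] ↥((Ideal.map (Ideal.Quotient.mk J) I).restrictScalars R) :=
    { toFun := fun a => ⟨Ideal.Quotient.mk J (a : R), Ideal.mem_map_of_mem _ a.2⟩
      map_add' := fun a b => by ext; simp
      map_smul' := fun r a => by
        ext
        simp [Algebra.smul_def, Ideal.Quotient.algebraMap_eq] }
  have hsurj : Function.Surjective f := by
    rintro ⟨y, hy⟩
    rw [Submodule.restrictScalars_mem] at hy
    obtain ⟨a, ha, rfl⟩ := Ideal.mem_image_of_mem_map_of_surjective _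
      Ideal.Quotient.mk_surjective hy
    exact ⟨⟨a, ha⟩, rfl⟩
  have hker : LinearMap.ker f = J • (⊤ : Submodule R ↥I) := by
    apply le_antisymm
    · rintro ⟨a, ha⟩ hfa
      have : Ideal.Quotient.mk J a = 0 := congrArg Subtype.val hfa
      rw [Ideal.Quotient.eq_zero_iff_mem, hJ, Ideal.mem_span_singleton] at this
      obtain ⟨r, hr⟩ := this
      have hrI : r ∈ I := hxn r (hr ▸ ha)
      have : (⟨a, ha⟩ : ↥I) = (x ^ n) • ⟨r, hrI⟩ := by
        ext; simp [hr, smul_eq_mul]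
      rw [this]
      exact Submodule.smul_mem_smul (Ideal.mem_span_singleton_self _) trivial
    · rw [Submodule.smul_le]
      intro c hc a _
      have : Ideal.Quotient.mk J (c * (a : R)) = 0 := by
        rw [Ideal.Quotient.eq_zero_iff_mem]
        exact J.mul_mem_right _ hc
      exact Subtype.ext this
  exact ⟨(Submodule.quotEquivOfEq _ _ hker.symm).trans
    (f.quotKerEquivOfSurjective hsurj)⟩
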